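/- Let A be a convex acceptance set with nonempty interior in an ordered locally convex space X and S a traded asset whose payoff S_T is strictly positive. Then ρ_{A,S} is finitely valued and continuous on X (in particular it never attains −∞ or +∞). -/

import Mathlib

open Filter Topology

variable {X : Type*} [AddCommGroup X] [Module ℝ X] [PartialOrder X]
  [CovariantClass X X (· + ·) (· ≤ ·)] [PosSMulMono ℝ X]
  [TopologicalSpace X] [IsTopologicalAddGroup X] [ContinuousSMul ℝ X]

/-- The risk measure `ρ_{A,S}(x) = inf {m : x + (m/S₀)·S_T ∈ A}`, valued in `EReal`
(with `inf ∅ = ⊤` and unbounded-below giving `⊥`). -/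
noncomputable def rho (A : Set X) (S0 : ℝ) (ST : X) (x : X) : EReal :=
  sInf ((fun r : ℝ => (r : EReal)) '' {r : ℝ | x + (r / S0) • ST ∈ A})

/-- A set is monotone if it contains, with any element, every larger element. -/
def MonotoneSet (A : Set X) : Prop := ∀ x ∈ A, ∀ y, x ≤ y → y ∈ A

/-- An acceptance set: nonempty, proper, and monotone. -/
def AcceptanceSet (A : Set X) : Prop := A.Nonempty ∧ A ≠ Set.univ ∧ MonotoneSet A

/-- The algebraic core (algebraic interior) of a set. -/
def algCore (A : Set X) : Set X :=
  {x | ∀ y : X, ∃ ε > 0, ∀ l : ℝ, |l| < ε → x + l • y ∈ A}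

/-- `Z` is strictly positive: every nonzero positive continuous linear functional is
strictly positive on `Z`. -/
def StrictlyPositiveElt (Z : X) : Prop :=
  0 ≤ Z ∧ ∀ ψ : X →L[ℝ] ℝ, ψ ≠ 0 → (∀ x : X, 0 ≤ x → 0 ≤ ψ x) → 0 < ψ Z

/-- Auxiliary: the interior of a monotone set is monotone. -/
lemma mem_interior_of_le_aux {A : Set X} (hmono : MonotoneSet A) {a y : X}
    (ha : a ∈ interior A) (h : a ≤ y) : y ∈ interior A := by
  have h0 : (0 : X) ≤ y - a := sub_nonneg.2 h
  have hsub : (fun z => z + (y - a)) '' interior A ⊆ A := by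
    rintro _ ⟨z, hz, rfl⟩
    exact hmono z (interior_subset hz) _ (le_add_of_nonneg_right h0)
  have hopen : IsOpen ((fun z => z + (y - a)) '' interior A) := by
    have : IsOpenMap (fun z : X => z + (y - a)) :=
      (Homeomorph.addRight (y - a)).isOpenMap
    exact this _ isOpen_interior
  have hy : y ∈ (fun z => z + (y - a)) '' interior A := ⟨a, ha, by simp⟩
  exact interior_maximal hsub hopen hy

/-- for a convex acceptance set with nonempty interior in an ordered
locally convex space, if the payoff S_T is strictly positive then ρ_{A,S} is
finitely valued and continuous. -/
theorem rho_finite_continuous_of_strictlyPositive_payoff [LocallyConvexSpace ℝ X]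
    (A : Set X) (S0 : ℝ) (ST : X)
    (hA : AcceptanceSet A) (hconv : Convex ℝ A) (hint : (interior A).Nonempty)
    (hS0 : 0 < S0) (hSTne : ST ≠ 0) (hST : StrictlyPositiveElt ST) :
    (∀ x : X, rho A S0 ST x ≠ ⊤ ∧ rho A S0 ST x ≠ ⊥) ∧
    Continuous (rho A S0 ST) := by
  obtain ⟨hAne, hAprop, hmono⟩ := hA
  obtain ⟨hSTpos, hSTstrict⟩ := hST
  obtain ⟨astar, hastar⟩ := hint
  -- order comparison along the ST direction
  have hle : ∀ (x : X) (a b : ℝ), a ≤ b → x + (a / S0) • ST ≤ x + (b / S0) • ST := by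
    intro x a b hab
    have h0 : (0 : X) ≤ ((b - a) / S0) • ST :=
      smul_nonneg (div_nonneg (by linarith) hS0.le) hSTpos
    have heq : x + (b / S0) • ST = (x + (a / S0) • ST) + ((b - a) / S0) • ST := by
      have h1 : (b / S0 : ℝ) = a / S0 + (b - a) / S0 := by ring
      rw [h1, add_smul]; abel
    rw [heq]
    exact le_add_of_nonneg_right h0
  -- the acceptance family is upward closed
  have hup : ∀ (x : X) (r : ℝ), x + (r / S0) • ST ∈ A → ∀ r', r ≤ r' →
      x + (r' / S0) • ST ∈ A := by
    intro x r hr r' hrr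
    exact hmono _ hr _ (hle x r r' hrr)
  -- `A ⊆ closure (interior A)`
  have hAsubcl : A ⊆ closure (interior A) := by
    intro a ha
    have htend : Tendsto (fun t : ℝ => a + t • (astar - a)) (𝓝[>] (0 : ℝ)) (𝓝 a) := by
      have h1 : Tendsto (fun t : ℝ => a + t • (astar - a)) (𝓝 0)
          (𝓝 (a + (0 : ℝ) • (astar - a))) :=
        (continuous_const.add (continuous_id.smul continuous_const)).tendsto 0
      simpa using h1.mono_left nhdsWithin_le_nhds
    refine mem_closure_of_tendsto htend ?_
    filter_upwards [Ioc_mem_nhdsGT_of_mem ⟨le_refl (0 : ℝ), zero_lt_one⟩] with t ht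
    exact hconv.add_smul_sub_mem_interior ha hastar ht
  -- lower bounds on interior give lower bounds on A
  have hge_on_A : ∀ (g : X →L[ℝ] ℝ) (c : ℝ), (∀ a ∈ interior A, c ≤ g a) →
      ∀ a ∈ A, c ≤ g a := by
    intro g c hg a ha
    have hcl : closure (interior A) ⊆ {z | c ≤ g z} :=
      closure_minimal (fun z hz => hg z hz) (isClosed_le continuous_const g.continuous)
    exact hcl (hAsubcl ha)
  -- functionals bounded below on A are positive
  have hpos_of_lb : ∀ (g : X →L[ℝ] ℝ) (c : ℝ), (∀ a ∈ A, c ≤ g a) →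
      ∀ z : X, 0 ≤ z → 0 ≤ g z := by
    intro g c hg z hz
    by_contra h
    push_neg at h
    obtain ⟨a₀, ha₀⟩ := hAne
    have key : ∀ t : ℝ, 0 ≤ t → c ≤ g a₀ + t * g z := by
      intro t ht
      have hmem : a₀ + t • z ∈ A :=
        hmono _ ha₀ _ (le_add_of_nonneg_right (smul_nonneg ht hz))
      have := hg _ hmem
      simpa [map_add, map_smul, smul_eq_mul] using this
    have hca₀ : c ≤ g a₀ := by have := key 0 le_rfl; linarith
    have hgz : g z ≠ 0 := ne_of_lt h
    have hnum : (0 : ℝ) < g a₀ - c + 1 := by linarith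
    have hden : (0 : ℝ) < -g z := by linarith
    have h1 := key ((g a₀ - c + 1) / (-g z)) (le_of_lt (div_pos hnum hden))
    have h2 : ((g a₀ - c + 1) / (-g z)) * g z = -(g a₀ - c + 1) := by
      field_simp
    linarith
  -- the global separating functional ψ
  obtain ⟨y₀, hy₀⟩ : ∃ y, y ∉ A := by
    by_contra h
    push_neg at h
    exact hAprop (Set.eq_univ_of_forall h)
  obtain ⟨f, hf⟩ := geometric_hahn_banach_open_point hconv.interior isOpen_interior
    (fun h => hy₀ (interior_subset h))
  set ψ : X →L[ℝ] ℝ := -f with hψdef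
  have hψint : ∀ a ∈ interior A, ψ y₀ ≤ ψ a := by
    intro a ha
    have := hf a ha
    simp only [hψdef, ContinuousLinearMap.neg_apply]
    linarith
  have hψA : ∀ a ∈ A, ψ y₀ ≤ ψ a := hge_on_A ψ (ψ y₀) hψint
  have hψpos : ∀ z : X, 0 ≤ z → 0 ≤ ψ z := hpos_of_lb ψ (ψ y₀) hψA
  have hψne : ψ ≠ 0 := by
    intro h0
    have h1 := hf astar hastar
    rw [show f = -ψ by simp [hψdef], h0] at h1
    simp at h1
  have hψST : 0 < ψ ST := hSTstrict ψ hψne hψpos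
  -- the acceptance sets are bounded below
  have hbdd : ∀ (x : X) (r : ℝ), x + (r / S0) • ST ∈ A →
      S0 * (ψ y₀ - ψ x) / ψ ST ≤ r := by
    intro x r hr
    have h1 : ψ y₀ ≤ ψ x + (r / S0) * ψ ST := by
      have := hψA _ hr
      simpa [map_add, map_smul, smul_eq_mul] using this
    rw [div_le_iff₀ hψST]
    have h2 : S0 * (ψ y₀ - ψ x) ≤ S0 * ((r / S0) * ψ ST) :=
      mul_le_mul_of_nonneg_left (by linarith) hS0.le
    have h3 : S0 * ((r / S0) * ψ ST) = r * ψ ST := by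
      field_simp
    linarith
  -- existence: every x can be pushed into the interior of A
  have hexists : ∀ x : X, ∃ r : ℝ, x + (r / S0) • ST ∈ interior A := by
    intro x
    by_contra h
    push_neg at h
    set L : Set X := Set.range (fun lam : ℝ => x + lam • ST) with hLdef
    have hLconv : Convex ℝ L := by
      rintro p ⟨l1, rfl⟩ q ⟨l2, rfl⟩ a b ha hb hab
      refine ⟨a * l1 + b * l2, ?_⟩
      have h1 : a • (x + l1 • ST) + b • (x + l2 • ST)
          = (a + b) • x + (a * l1 + b * l2) • ST := by module
      simp only [h1, hab, one_smul]
    have hdisj : Disjoint (interior A) L := by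
      rw [Set.disjoint_right]
      rintro p ⟨lam, rfl⟩
      have h1 := h (lam * S0)
      rwa [mul_div_cancel_right₀ _ hS0.ne'] at h1
    obtain ⟨g, u, hg1, hg2⟩ :=
      geometric_hahn_banach_open hconv.interior isOpen_interior hLconv hdisj
    set φ : X →L[ℝ] ℝ := -g with hφdef
    have hφint : ∀ a ∈ interior A, -u ≤ φ a := by
      intro a ha
      have := hg1 a ha
      simp only [hφdef, ContinuousLinearMap.neg_apply]
      linarith
    have hφA : ∀ a ∈ A, -u ≤ φ a := hge_on_A φ (-u) hφint
    have hφpos : ∀ z : X, 0 ≤ z → 0 ≤ φ z := hpos_of_lb φ (-u) hφA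
    have hφne : φ ≠ 0 := by
      intro h0
      have h1 : g astar < u := hg1 astar hastar
      have h2 : u ≤ g (x + (0 : ℝ) • ST) := hg2 _ ⟨0, rfl⟩
      have h3 : g = -φ := by simp [hφdef]
      rw [h3, h0] at h1 h2
      simp at h1 h2
      linarith
    have hφST : 0 < φ ST := hSTstrict φ hφne hφpos
    -- g ST = -φ ST < 0, so g is unbounded below on L, contradicting u ≤ g on L
    set lam : ℝ := (u - g x) / (g ST) + 1 with hlamdef
    have hgST : g ST < 0 := by
      have : φ ST = -g ST := by simp [hφdef]
      linarith
    have h2 := hg2 (x + lam • ST) ⟨lam, rfl⟩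
    have h3 : g (x + lam • ST) = g x + lam * g ST := by
      simp [map_add, map_smul, smul_eq_mul]
    have h4 : ((u - g x) / g ST) * g ST = u - g x :=
      div_mul_cancel₀ _ (ne_of_lt hgST)
    have h5 : lam * g ST = u - g x + g ST := by
      rw [hlamdef, add_mul, one_mul, h4]
    rw [h3, h5] at h2
    linarith
  -- the acceptance set in the r-variable
  have hTne : ∀ x : X, {r : ℝ | x + (r / S0) • ST ∈ A}.Nonempty := by
    intro x
    obtain ⟨r, hr⟩ := hexists x
    exact ⟨r, interior_subset (s := A) hr⟩
  have hTbdd : ∀ x : X, BddBelow {r : ℝ | x + (r / S0) • ST ∈ A} := by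
    intro x
    exact ⟨S0 * (ψ y₀ - ψ x) / ψ ST, fun r hr => hbdd x r hr⟩
  set mfun : X → ℝ := fun x => sInf {r : ℝ | x + (r / S0) • ST ∈ A} with hmfundef
  -- convex combination along the ST line
  have hcombo : ∀ (x : X) (a b c : ℝ), a < c → c < b →
      x + (a / S0) • ST ∈ closure A → x + (b / S0) • ST ∈ interior A →
      x + (c / S0) • ST ∈ interior A := by
    intro x a b c hac hcb hAc hBc
    set t : ℝ := (c - a) / (b - a) with htdef
    have hba : (0 : ℝ) < b - a := by linarith
    have ht0 : 0 < t := div_pos (by linarith) hba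
    have ht1 : t < 1 := (div_lt_one hba).2 (by linarith)
    have h4 : t * (b - a) = c - a := div_mul_cancel₀ _ hba.ne'
    have hco : t * b + (1 - t) * a = c := by linear_combination h4
    have h1 : t * (b / S0) + (1 - t) * (a / S0) = c / S0 := by
      rw [← hco]; ring
    have h2 : t • (x + (b / S0) • ST) + (1 - t) • (x + (a / S0) • ST)
        = (t + (1 - t)) • x + (t * (b / S0) + (1 - t) * (a / S0)) • ST := by module
    have h3 : (t + (1 - t) : ℝ) = 1 := by ring
    have hmem := hconv.combo_interior_closure_mem_interior (a := t) (b := 1 - t) hBc hAc ht0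
      (by linarith) (by ring)
    rwa [h2, h1, h3, one_smul] at hmem
  -- strictly above the infimum: interior membership
  have hmem_int : ∀ (x : X) (r : ℝ), mfun x < r → x + (r / S0) • ST ∈ interior A := by
    intro x r hr
    obtain ⟨r', hr'T, hr'lt⟩ := exists_lt_of_csInf_lt (hTne x) hr
    obtain ⟨r₀, hr₀⟩ := hexists x
    have hr₁ : x + ((max r₀ (r + 1)) / S0) • ST ∈ interior A :=
      mem_interior_of_le_aux hmono hr₀ (hle x r₀ _ (le_max_left _ _))
    exact hcombo x r' (max r₀ (r + 1)) r hr'lt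
      (lt_of_lt_of_le (by linarith) (le_max_right _ _)) (subset_closure hr'T) hr₁
  -- strictly below the infimum: outside the closure
  have hnot_cl : ∀ (x : X) (r : ℝ), r < mfun x → x + (r / S0) • ST ∉ closure A := by
    intro x r hr hcl
    have hb : x + ((mfun x + 1) / S0) • ST ∈ interior A := hmem_int x _ (by linarith)
    have hmid : x + (((r + mfun x) / 2) / S0) • ST ∈ interior A :=
      hcombo x r (mfun x + 1) ((r + mfun x) / 2) (by linarith) (by linarith) hcl hb
    have hmem : (r + mfun x) / 2 ∈ {s : ℝ | x + (s / S0) • ST ∈ A} :=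
      interior_subset (s := A) hmid
    have := csInf_le (hTbdd x) hmem
    linarith
  -- rho is the real infimum, coerced
  have hrho : ∀ x : X, rho A S0 ST x = ((mfun x : ℝ) : EReal) := by
    intro x
    have hmono' : Monotone (fun r : ℝ => (r : EReal)) :=
      fun a b h => EReal.coe_le_coe_iff.2 h
    have := Monotone.map_csInf_of_continuousAt
      (f := fun r : ℝ => (r : EReal)) (continuous_coe_real_ereal.continuousAt)
      hmono' (hTne x) (hTbdd x)
    rw [rho, ← this]
  -- continuity of the real-valued function
  have hcont : Continuous mfun := by
    rw [continuous_iff_continuousAt]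
    intro x
    rw [ContinuousAt, Metric.tendsto_nhds]
    intro ε hε
    have h1 : x + ((mfun x + ε / 2) / S0) • ST ∈ interior A :=
      hmem_int x _ (by linarith)
    have h2 : x + ((mfun x - ε / 2) / S0) • ST ∉ closure A :=
      hnot_cl x _ (by linarith)
    have hU1 : IsOpen {y : X | y + ((mfun x + ε / 2) / S0) • ST ∈ interior A} :=
      isOpen_interior.preimage (continuous_id.add continuous_const)
    have hU2 : IsOpen {y : X | y + ((mfun x - ε / 2) / S0) • ST ∉ closure A} := by
      have := (isClosed_closure (s := A)).preimage
        (continuous_id.add (continuous_const (y := ((mfun x - ε / 2) / S0) • ST)))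
      exact this.isOpen_compl
    filter_upwards [hU1.mem_nhds h1, hU2.mem_nhds h2] with y hy1 hy2
    have hub : mfun y ≤ mfun x + ε / 2 := csInf_le (hTbdd y) (interior_subset (s := A) hy1)
    have hlb : mfun x - ε / 2 ≤ mfun y := by
      by_contra hcon
      push_neg at hcon
      obtain ⟨r, hrT, hrlt⟩ := exists_lt_of_csInf_lt (hTne y) hcon
      exact hy2 (subset_closure (hup y r hrT _ hrlt.le))
    rw [Real.dist_eq, abs_lt]
    constructor <;> linarith
  constructor
  · intro x
    rw [hrho x]
    exact ⟨EReal.coe_ne_top _, EReal.coe_ne_bot _⟩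
  · have heq : rho A S0 ST = fun x => ((mfun x : ℝ) : EReal) := funext hrho
    rw [heq]
    exact continuous_coe_real_ereal.comp hcont
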